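/- arXiv:1604.03183 — 5 statements merged into one kernel-verified Lean document; each statement's English description precedes it below -/
import Mathlib

section
/- Let λ > 0, τ > 0 and SNR > 0 be real numbers, and set κ(τ) = 1 + √τ · arctan(√τ). Then πλ ∫_0^∞ exp(-πλ κ(τ) v - (τ/SNR) v²) dv = (π^{3/2} λ / √(τ/SNR)) · exp((λπκ(τ))²/(4τ/SNR)) · Q(λπκ(τ)/√(2τ/SNR)), where Q(x) = (1/√(2π)) ∫_x^∞ exp(-y²/2) dy. This is the downlink coverage probability of a Poisson cellular network with path loss exponent α = 4, BS density λ, SINR threshold τ, and signal-to-noise ratio SNR. -/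
open MeasureTheory Real Set

/-- The standard Gaussian tail probability Q(x) = (1/√(2π)) ∫_x^∞ exp(-y²/2) dy. -/
noncomputable def gaussianQ (x : ℝ) : ℝ :=
  (1 / Real.sqrt (2 * Real.pi)) * ∫ y in Set.Ioi x, Real.exp (-y ^ 2 / 2)

/-- κ(τ) = 1 + √τ · arctan(√τ). -/
noncomputable def kappa (τ : ℝ) : ℝ := 1 + Real.sqrt τ * Real.arctan (Real.sqrt τ)

lemma integral_Ioi_comp_add_right (g : ℝ → ℝ) (a c : ℝ) :
    (∫ x in Set.Ioi a, g (x + c)) = ∫ x in Set.Ioi (a + c), g x := by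
  have m : ∀ d : ℝ, MeasurableSet (Set.Ioi d) := fun d => measurableSet_Ioi
  rw [← integral_indicator (m a), ← integral_indicator (m (a + c)),
    ← integral_add_right_eq_self ((Set.Ioi (a + c)).indicator g) c]
  congr 1
  ext x
  rw [← Set.indicator_comp_right (fun x : ℝ => x + c)]
  have : (fun x : ℝ => x + c) ⁻¹' Set.Ioi (a + c) = Set.Ioi a := by
    rw [Set.preimage_add_const_Ioi]; simp
  rw [this]
  rfl

/-- Downlink coverage probability of a Poisson cellular network with α = 4, BS density λ,
SINR threshold τ and signal-to-noise ratio SNR: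
πλ ∫_0^∞ exp(-πλκ(τ)v - (τ/SNR)v²) dv
  = (π^{3/2}λ/√(τ/SNR)) · exp((λπκ(τ))²/(4τ/SNR)) · Q(λπκ(τ)/√(2τ/SNR)). -/
theorem coverage_alpha_four_with_noise (lam τ SNR : ℝ)
    (hlam : 0 < lam) (hτ : 0 < τ) (hSNR : 0 < SNR) :
    Real.pi * lam *
        ∫ v in Set.Ioi (0 : ℝ),
          Real.exp (-(Real.pi * lam * kappa τ) * v - (τ / SNR) * v ^ 2) =
      (Real.pi ^ ((3 : ℝ) / 2) * lam / Real.sqrt (τ / SNR)) *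
        Real.exp ((lam * Real.pi * kappa τ) ^ 2 / (4 * (τ / SNR))) *
        gaussianQ (lam * Real.pi * kappa τ / Real.sqrt (2 * (τ / SNR))) := by
  set a : ℝ := Real.pi * lam * kappa τ with ha
  set b : ℝ := τ / SNR with hb
  have hbpos : 0 < b := div_pos hτ hSNR
  have h2b : (0 : ℝ) < 2 * b := by linarith
  have hs2b : (0 : ℝ) < Real.sqrt (2 * b) := Real.sqrt_pos.mpr h2b
  have hsb : (0 : ℝ) < Real.sqrt b := Real.sqrt_pos.mpr hbpos
  -- Step 1: complete the square pointwise
  have hpt : ∀ v : ℝ, Real.exp (-a * v - b * v ^ 2) =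
      Real.exp (a ^ 2 / (4 * b)) * Real.exp (-(((v + a / (2 * b)) * Real.sqrt (2 * b)) ^ 2) / 2) := by
    intro v
    rw [← Real.exp_add]
    congr 1
    have hsq : (Real.sqrt (2 * b)) ^ 2 = 2 * b := Real.sq_sqrt h2b.le
    field_simp [mul_pow, hsq]
    rw [mul_comm b 2, hsq]
    ring
  have key : (∫ v in Set.Ioi (0 : ℝ), Real.exp (-a * v - b * v ^ 2)) =
      Real.exp (a ^ 2 / (4 * b)) * ((Real.sqrt (2 * b))⁻¹ *
        ∫ y in Set.Ioi (a / Real.sqrt (2 * b)), Real.exp (-y ^ 2 / 2)) := by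
    rw [show (∫ v in Set.Ioi (0 : ℝ), Real.exp (-a * v - b * v ^ 2))
        = ∫ v in Set.Ioi (0 : ℝ), Real.exp (a ^ 2 / (4 * b)) *
            Real.exp (-(((v + a / (2 * b)) * Real.sqrt (2 * b)) ^ 2) / 2) from
      setIntegral_congr_fun measurableSet_Ioi (fun v _ => hpt v)]
    rw [integral_const_mul]
    congr 1
    have := integral_Ioi_comp_add_right
      (fun u => Real.exp (-((u * Real.sqrt (2 * b)) ^ 2) / 2)) 0 (a / (2 * b))
    rw [this, zero_add]
    have := integral_comp_mul_right_Ioi (fun y => Real.exp (-y ^ 2 / 2))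
      (a / (2 * b)) hs2b
    rw [this, smul_eq_mul,
      show a / (2 * b) * Real.sqrt (2 * b) = a / Real.sqrt (2 * b) by
        rw [div_mul_eq_mul_div, div_eq_div_iff h2b.ne' hs2b.ne', mul_assoc,
          Real.mul_self_sqrt h2b.le]]
  rw [key, gaussianQ]
  have harg : lam * Real.pi * kappa τ / Real.sqrt (2 * (τ / SNR)) = a / Real.sqrt (2 * b) := by
    rw [ha, hb]; ring_nf
  have hexp : (lam * Real.pi * kappa τ) ^ 2 / (4 * (τ / SNR)) = a ^ 2 / (4 * b) := by
    rw [ha, hb]; ring_nf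
  rw [harg, hexp]
  have hpi32 : Real.pi ^ ((3 : ℝ) / 2) = Real.pi * Real.sqrt Real.pi := by
    rw [show (3 : ℝ) / 2 = 1 + 1 / 2 by norm_num, Real.rpow_add Real.pi_pos,
      Real.rpow_one, ← Real.sqrt_eq_rpow]
  have hs2 : (0 : ℝ) < Real.sqrt 2 := by positivity
  have hspi : (0 : ℝ) < Real.sqrt Real.pi := Real.sqrt_pos.mpr Real.pi_pos
  rw [hpi32, Real.sqrt_mul (by norm_num : (0:ℝ) ≤ 2) Real.pi,
    show (2 : ℝ) * (τ / SNR) = 2 * b from rfl,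
    Real.sqrt_mul (by norm_num : (0:ℝ) ≤ 2) b]
  field_simp
end

section
/- For every real number c > 0, ∫_0^∞ (1 - e^{-c x^{-4}}) x dx = √(π c)/2. Consequently, for a homogeneous PPP of intensity λ with constant transmit power p and path loss exponent α = 4, the Laplace transform of the interference at the origin is E[e^{-sI}] = exp(-2πλ ∫_0^∞ (1 - e^{-s p x^{-4}}) x dx) = exp(-πλ √(π s p)) for s > 0. -/
open MeasureTheory Real Set Filter

lemma gauss_prim_deriv (c : ℝ) (y : ℝ) :
    HasDerivAt (fun u : ℝ => ∫ t in (0:ℝ)..u, c * Real.exp (-(c * t ^ 2)))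
      (c * Real.exp (-(c * y ^ 2))) y := by
  have cont : Continuous fun t : ℝ => c * Real.exp (-(c * t ^ 2)) := by fun_prop
  exact intervalIntegral.integral_hasDerivAt_right (cont.intervalIntegrable _ _)
    cont.aestronglyMeasurable.stronglyMeasurableAtFilter cont.continuousAt

lemma key (c : ℝ) (hc : 0 < c) :
    ∫ x in Set.Ioi (0 : ℝ), (1 - Real.exp (-(c * x ^ (-(4 : ℝ))))) * x =
      Real.sqrt (Real.pi * c) / 2 := by
  set g : ℝ → ℝ := fun y => (1 - Real.exp (-(c * y ^ 2))) / (2 * y ^ 2) with hgdef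
  have step1 : ∫ x in Set.Ioi (0 : ℝ), (1 - Real.exp (-(c * x ^ (-(4 : ℝ))))) * x
      = ∫ x in Set.Ioi (0:ℝ), (|(-2:ℝ)| * x ^ ((-2:ℝ) - 1)) • g (x ^ (-2:ℝ)) := by
    apply setIntegral_congr_fun measurableSet_Ioi
    intro x hx
    simp only [hgdef, smul_eq_mul]
    have hx0 : (0:ℝ) < x := hx
    have hx4 : (x ^ (-2:ℝ)) ^ 2 = x ^ (-(4:ℝ)) := by
      rw [← Real.rpow_natCast (x ^ (-2:ℝ)) 2, ← Real.rpow_mul hx0.le]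
      norm_num
    rw [hx4]
    have h4 : x ^ (-(4:ℝ)) ≠ 0 := (Real.rpow_pos_of_pos hx0 _).ne'
    have habs : |(-2:ℝ)| = 2 := by norm_num
    rw [habs]
    have hpow : x ^ ((-2:ℝ) - 1) = x ^ (-(4:ℝ)) * x := by
      rw [show (-2:ℝ) - 1 = -4 + 1 by norm_num, Real.rpow_add hx0, Real.rpow_one]
    rw [hpow]
    field_simp
  rw [step1, integral_comp_rpow_Ioi g (by norm_num : (-2:ℝ) ≠ 0)]
  -- now compute ∫ y in Ioi 0, g y
  set F : ℝ → ℝ := fun y => (Real.exp (-(c * y ^ 2)) - 1) / (2 * y)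
      + ∫ t in (0:ℝ)..y, c * Real.exp (-(c * t ^ 2)) with hFdef
  have hF0 : F 0 = 0 := by simp [hFdef]
  have hderiv : ∀ y ∈ Ioi (0:ℝ), HasDerivAt F (g y) y := by
    intro y hy
    have hy0 : (0:ℝ) < y := hy
    have hinner : HasDerivAt (fun y : ℝ => -(c * y ^ 2)) (-(c * (2 * y))) y := by
      exact (((hasDerivAt_pow 2 y).const_mul c).neg).congr_deriv (by simp)
    have hexp : HasDerivAt (fun y : ℝ => Real.exp (-(c * y ^ 2)) - 1)
        (Real.exp (-(c * y ^ 2)) * (-(c * (2 * y)))) y := (hinner.exp).sub_const 1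
    have hden : HasDerivAt (fun y : ℝ => 2 * y) 2 y := by
      simpa using (hasDerivAt_id y).const_mul 2
    have hdiv := hexp.div hden (by positivity : (0:ℝ) < 2 * y).ne'
    have := hdiv.add (gauss_prim_deriv c y)
    refine this.congr_deriv ?_
    simp only [hgdef]
    field_simp
    ring
  have hnonneg : ∀ y ∈ Ioi (0:ℝ), 0 ≤ g y := by
    intro y hy
    have hy0 : (0:ℝ) < y := hy
    apply div_nonneg _ (by positivity)
    have : Real.exp (-(c * y ^ 2)) ≤ 1 := Real.exp_le_one_iff.mpr (neg_nonpos.mpr (by positivity))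
    linarith
  have hcont : ContinuousWithinAt F (Ici 0) 0 := by
    rw [← continuousWithinAt_Ioi_iff_Ici]
    unfold ContinuousWithinAt
    rw [hF0]
    have hslope : Tendsto (fun y : ℝ => (Real.exp (-(c * y ^ 2)) - 1) / (2 * y))
        (nhdsWithin 0 (Ioi 0)) (nhds 0) := by
      have hd : HasDerivAt (fun y : ℝ => Real.exp (-(c * y ^ 2))) 0 0 := by
        have hinner : HasDerivAt (fun y : ℝ => -(c * y ^ 2)) (-(c * (2 * 0))) 0 := by
          exact (((hasDerivAt_pow 2 (0:ℝ)).const_mul c).neg).congr_deriv (by simp)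
        simpa using hinner.exp
      rw [hasDerivAt_iff_tendsto_slope] at hd
      have h2 : Tendsto (fun y : ℝ => slope (fun y : ℝ => Real.exp (-(c * y ^ 2))) 0 y / 2)
          (nhdsWithin 0 (Ioi 0)) (nhds 0) := by
        simpa using (hd.mono_left (nhdsWithin_mono _ (by
          intro x hx
          exact ne_of_gt hx))).div_const 2
      refine h2.congr fun y => ?_
      simp [slope_def_field, div_div]
      ring_nf
    have hprim : Tendsto (fun y : ℝ => ∫ t in (0:ℝ)..y, c * Real.exp (-(c * t ^ 2)))
        (nhdsWithin 0 (Ioi 0)) (nhds 0) := by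
      have := (gauss_prim_deriv c 0).continuousAt.tendsto
      simp only [intervalIntegral.integral_same] at this
      exact this.mono_left nhdsWithin_le_nhds
    simpa only [add_zero] using hslope.add hprim
  have hlim : Tendsto F atTop (nhds (Real.sqrt (Real.pi * c) / 2)) := by
    have h1 : Tendsto (fun y : ℝ => (Real.exp (-(c * y ^ 2)) - 1) / (2 * y)) atTop (nhds 0) := by
      apply squeeze_zero_norm' (a := fun y : ℝ => 1 / (2 * y))
      · filter_upwards [eventually_gt_atTop (0:ℝ)] with y hy
        rw [Real.norm_eq_abs, abs_div, abs_of_pos (by positivity : (0:ℝ) < 2 * y)]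
        apply div_le_div_of_nonneg_right ?_ (by positivity)
        have he1 : Real.exp (-(c * y ^ 2)) ≤ 1 := Real.exp_le_one_iff.mpr (neg_nonpos.mpr (by positivity))
        have he0 : 0 < Real.exp (-(c * y ^ 2)) := Real.exp_pos _
        rw [abs_sub_comm, abs_of_nonneg (by linarith)]
        linarith
      · have : Tendsto (fun y : ℝ => 2 * y) atTop atTop := tendsto_id.const_mul_atTop two_pos
        simpa [Function.comp] using tendsto_inv_atTop_zero.comp this |>.div_const 1 |> fun h => h
    have hint : IntegrableOn (fun t : ℝ => c * Real.exp (-(c * t ^ 2))) (Ioi 0) := by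
      have := (integrable_exp_neg_mul_sq hc).const_mul c
      exact (this.congr (by simp [neg_mul])).integrableOn
    have h2 : Tendsto (fun y : ℝ => ∫ t in (0:ℝ)..y, c * Real.exp (-(c * t ^ 2))) atTop
        (nhds (Real.sqrt (Real.pi * c) / 2)) := by
      have h3 := intervalIntegral_tendsto_integral_Ioi 0 hint tendsto_id
      have h4 : ∫ t in Ioi (0:ℝ), c * Real.exp (-(c * t ^ 2)) = Real.sqrt (Real.pi * c) / 2 := by
        rw [integral_const_mul]
        have : ∀ t : ℝ, Real.exp (-(c * t ^ 2)) = Real.exp (-c * t ^ 2) := by intro t; ring_nf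
        simp_rw [this, integral_gaussian_Ioi]
        have hcs : Real.sqrt (Real.pi * c) = c * Real.sqrt (Real.pi / c) := by
          rw [show Real.pi * c = c ^ 2 * (Real.pi / c) by field_simp,
            Real.sqrt_mul (by positivity), Real.sqrt_sq hc.le]
        rw [hcs]; ring
      rwa [h4] at h3
    simpa only [zero_add] using h1.add h2
  have := integral_Ioi_of_hasDerivAt_of_nonneg hcont hderiv hnonneg hlim
  rw [this, hF0, sub_zero]

/-- For c > 0:  ∫_0^∞ (1 - e^{-c x^{-4}}) x dx = √(πc)/2, and consequently for a
homogeneous PPP of intensity λ with transmit power p and path loss exponent 4, the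
Laplace transform of the interference at s > 0 is
exp(-2πλ ∫_0^∞ (1 - e^{-s p x^{-4}}) x dx) = exp(-πλ√(πsp)). -/
theorem interference_laplace_alpha_four (c lam p s : ℝ)
    (hc : 0 < c) (hlam : 0 < lam) (hp : 0 < p) (hs : 0 < s) :
    (∫ x in Set.Ioi (0 : ℝ), (1 - Real.exp (-(c * x ^ (-(4 : ℝ))))) * x =
      Real.sqrt (Real.pi * c) / 2) ∧
    Real.exp (-(2 * Real.pi * lam *
        ∫ x in Set.Ioi (0 : ℝ), (1 - Real.exp (-(s * p * x ^ (-(4 : ℝ))))) * x)) =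
      Real.exp (-(Real.pi * lam * Real.sqrt (Real.pi * s * p))) := by
  refine ⟨key c hc, ?_⟩
  rw [key (s * p) (by positivity)]
  congr 1
  rw [mul_assoc Real.pi s p]
  ring
end

section
/- Let ι be a finite index set, let a : ι → ℝ be nonnegative (the received powers), let σ² ≥ 0, let m ≥ 1 be a natural number, and let τ ≥ 1/m be a real threshold. Then the set of indices i ∈ ι such that a_i / (Σ_{j ≠ i} a_j + σ²) > τ has cardinality at most m. In particular, if τ > 1 then at most one index can satisfy the SINR coverage condition. -/
open Finset

/-- For nonnegative received powers a : ι → ℝ on a finite index set, noise σ² ≥ 0,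
m ≥ 1 and threshold τ ≥ 1/m, at most m indices can satisfy the SINR condition
a_i / (Σ_{j≠i} a_j + σ²) > τ. -/
theorem sinr_coverage_at_most_m {ι : Type*} [Fintype ι] [DecidableEq ι]
    (a : ι → ℝ) (ha : ∀ i, 0 ≤ a i) (σ2 : ℝ) (hσ2 : 0 ≤ σ2)
    (m : ℕ) (hm : 1 ≤ m) (τ : ℝ) (hτ : 1 / (m : ℝ) ≤ τ) :
    (Finset.univ.filter
        (fun i => τ < a i / ((∑ j ∈ Finset.univ.erase i, a j) + σ2))).card ≤ m := by
  set S := Finset.univ.filter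
      (fun i => τ < a i / ((∑ j ∈ Finset.univ.erase i, a j) + σ2)) with hS
  by_contra hcon
  push_neg at hcon
  have hm' : (0:ℝ) < (m:ℝ) := by exact_mod_cast hm
  have hτ0 : 0 < τ := lt_of_lt_of_le (by positivity) hτ
  set T := ∑ j, a j with hT
  have hTnn : 0 ≤ T := Finset.sum_nonneg fun i _ => ha i
  -- key bound for members of S
  have key : ∀ i ∈ S, T < ((m:ℝ) + 1) * a i := by
    intro i hi
    simp only [hS, Finset.mem_filter] at hi
    set D := (∑ j ∈ Finset.univ.erase i, a j) + σ2 with hD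
    have hDnn : 0 ≤ D := by
      apply add_nonneg _ hσ2
      exact Finset.sum_nonneg fun j _ => ha j
    have hDpos : 0 < D := by
      rcases hDnn.lt_or_eq with h | h
      · exact h
      · exfalso
        rw [← h, div_zero] at hi
        exact absurd hi.2 (not_lt.2 hτ0.le)
    have h1 : τ * D < a i := (lt_div_iff₀ hDpos).mp hi.2
    have h2 : (1 / (m:ℝ)) * D ≤ τ * D := mul_le_mul_of_nonneg_right hτ hDnn
    have hsum : (∑ j ∈ Finset.univ.erase i, a j) = T - a i := by
      have := Finset.add_sum_erase Finset.univ a (Finset.mem_univ i)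
      rw [hT]
      linarith
    have hDval : D = T - a i + σ2 := by rw [hD, hsum]
    have h3 : (1 / (m:ℝ)) * (T - a i + σ2) < a i := by
      have := lt_of_le_of_lt h2 h1
      rwa [hDval] at this
    have h4 : T - a i + σ2 < (m:ℝ) * a i := by
      have h5 := mul_lt_mul_of_pos_left h3 hm'
      have h6 : (m:ℝ) * (1/(m:ℝ)) = 1 := by field_simp
      nlinarith
    nlinarith
  have hcard : m + 1 ≤ S.card := hcon
  have hne : S.Nonempty := Finset.card_pos.mp (by omega)
  obtain ⟨i0, hi0⟩ := hne
  have hTpos : 0 < T := by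
    have := key i0 hi0
    have hai : 0 ≤ a i0 := ha i0
    by_contra hT0
    push_neg at hT0
    have hT0' : T = 0 := le_antisymm hT0 hTnn
    have hall : ∀ j, a j = 0 := by
      intro j
      have := Finset.sum_eq_zero_iff_of_nonneg (fun j _ => ha j) |>.mp hT0' j (Finset.mem_univ j)
      exact this
    have := key i0 hi0
    rw [hall i0, hT0'] at this
    simp at this
  have hsumS : ∑ i ∈ S, a i ≤ T := by
    apply Finset.sum_le_sum_of_subset_of_nonneg (Finset.subset_univ S)
    intro j _ _
    exact ha j
  have hlow : (S.card : ℝ) * T < ((m:ℝ) + 1) * ∑ i ∈ S, a i := by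
    calc (S.card : ℝ) * T = ∑ _i ∈ S, T := by rw [Finset.sum_const, nsmul_eq_mul]
    _ < ∑ i ∈ S, ((m:ℝ) + 1) * a i := Finset.sum_lt_sum_of_nonempty ⟨i0, hi0⟩ key
    _ = ((m:ℝ) + 1) * ∑ i ∈ S, a i := by rw [Finset.mul_sum]
  have hc : ((m:ℝ) + 1) ≤ (S.card : ℝ) := by exact_mod_cast hcard
  nlinarith [mul_le_mul_of_nonneg_left hsumS (by positivity : (0:ℝ) ≤ (m:ℝ)+1)]
end

section
/- For all real numbers λ > 0, c > 0 and α > 2, the following double-integral identity holds: 2πλ ∫_0^∞ x · (∫_0^{x²} (πλ e^{-πλ u}) / (1 + c^{-1} u^{-α/2} x^{α}) du) dx = 2 ∫_1^∞ v / (1 + c^{-1} v^{α}) dv. In particular, the left-hand side does not depend on λ. -/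
open MeasureTheory Real Set

/-- The two-variable kernel appearing after rewriting the inner interval integral as an
integral over `Ioi 0`. -/
noncomputable def ulF (lam c α : ℝ) (x u : ℝ) : ℝ :=
  Set.indicator (Set.Ioc 0 (x ^ 2))
    (fun u => x * (Real.pi * lam * Real.exp (-(Real.pi * lam * u)) /
      (1 + c⁻¹ * u ^ (-(α / 2)) * x ^ α))) u

lemma ulF_meas (lam c α : ℝ) : Measurable (Function.uncurry (ulF lam c α)) := by
  have h : Function.uncurry (ulF lam c α)
      = Set.indicator {p : ℝ × ℝ | 0 < p.2 ∧ p.2 ≤ p.1 ^ 2}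
        (fun p => p.1 * (Real.pi * lam * Real.exp (-(Real.pi * lam * p.2)) /
          (1 + c⁻¹ * p.2 ^ (-(α / 2)) * p.1 ^ α))) := by
    ext p
    simp [ulF, Function.uncurry, Set.indicator, Set.mem_Ioc, Set.mem_setOf_eq]
  rw [h]
  apply Measurable.indicator
  · fun_prop
  · exact (measurableSet_lt measurable_const measurable_snd).inter
      (measurableSet_le measurable_snd (measurable_fst.pow_const 2))

lemma ulD_one_le {c α x u : ℝ} (hc : 0 < c) (hx : 0 < x) (hu : 0 < u) :
    (1 : ℝ) ≤ 1 + c⁻¹ * u ^ (-(α / 2)) * x ^ α := by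
  have h1 : 0 < u ^ (-(α / 2)) := Real.rpow_pos_of_pos hu _
  have h2 : 0 < x ^ α := Real.rpow_pos_of_pos hx _
  have h3 : 0 < c⁻¹ := inv_pos.2 hc
  nlinarith [mul_pos (mul_pos h3 h1) h2]

/-- Pointwise bound 1: valid for all `u`, with `0 < x`. -/
lemma ulF_bound1 {lam c α x : ℝ} (hlam : 0 < lam) (hc : 0 < c) (hx : 0 < x) (u : ℝ) :
    ‖ulF lam c α x u‖ ≤
      Set.indicator (Set.Ioc 0 (x ^ 2)) (fun _ => Real.pi * lam * x) u := by
  have hβ : 0 < Real.pi * lam := mul_pos Real.pi_pos hlam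
  by_cases hu : u ∈ Set.Ioc 0 (x ^ 2)
  · rw [ulF, Set.indicator_of_mem hu, Set.indicator_of_mem hu]
    have hD : (1 : ℝ) ≤ 1 + c⁻¹ * u ^ (-(α / 2)) * x ^ α := ulD_one_le hc hx hu.1
    have hDpos : (0 : ℝ) < 1 + c⁻¹ * u ^ (-(α / 2)) * x ^ α := lt_of_lt_of_le one_pos hD
    have hexp : Real.exp (-(Real.pi * lam * u)) ≤ 1 := by
      rw [Real.exp_le_one_iff]
      nlinarith [hu.1]
    have hval : 0 ≤ x * (Real.pi * lam * Real.exp (-(Real.pi * lam * u)) /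
        (1 + c⁻¹ * u ^ (-(α / 2)) * x ^ α)) := by
      apply mul_nonneg hx.le
      apply div_nonneg _ hDpos.le
      positivity
    rw [Real.norm_eq_abs, abs_of_nonneg hval]
    calc x * (Real.pi * lam * Real.exp (-(Real.pi * lam * u)) /
        (1 + c⁻¹ * u ^ (-(α / 2)) * x ^ α))
        ≤ x * (Real.pi * lam * 1 / 1) := by
          apply mul_le_mul_of_nonneg_left _ hx.le
          apply div_le_div₀ (by positivity) _ one_pos hD
          nlinarith [Real.exp_pos (-(Real.pi * lam * u))]
      _ = Real.pi * lam * x := by ring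
  · rw [ulF, Set.indicator_of_notMem hu, Set.indicator_of_notMem hu]
    simp

/-- Pointwise bound 2: valid for `0 < x`, `0 < u`. -/
lemma ulF_bound2 {lam c α x u : ℝ} (hlam : 0 < lam) (hc : 0 < c) (hx : 0 < x) (hu : 0 < u) :
    ‖ulF lam c α x u‖ ≤
      (c * (Real.pi * lam) * x ^ ((1 : ℝ) - α)) *
        (u ^ (α / 2) * Real.exp (-(Real.pi * lam * u))) := by
  have hβ : 0 < Real.pi * lam := mul_pos Real.pi_pos hlam
  have hu2 : 0 < u ^ (α / 2) := Real.rpow_pos_of_pos hu _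
  have hu3 : 0 < u ^ (-(α / 2)) := Real.rpow_pos_of_pos hu _
  have hxα : 0 < x ^ α := Real.rpow_pos_of_pos hx _
  have hx1α : 0 < x ^ ((1 : ℝ) - α) := Real.rpow_pos_of_pos hx _
  have hRHS : 0 ≤ (c * (Real.pi * lam) * x ^ ((1 : ℝ) - α)) *
      (u ^ (α / 2) * Real.exp (-(Real.pi * lam * u))) := by positivity
  by_cases hmem : u ∈ Set.Ioc 0 (x ^ 2)
  · rw [ulF, Set.indicator_of_mem hmem]
    have hD0 : 0 < c⁻¹ * u ^ (-(α / 2)) * x ^ α := by positivity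
    have hD : c⁻¹ * u ^ (-(α / 2)) * x ^ α ≤ 1 + c⁻¹ * u ^ (-(α / 2)) * x ^ α := by linarith
    have hval : 0 ≤ x * (Real.pi * lam * Real.exp (-(Real.pi * lam * u)) /
        (1 + c⁻¹ * u ^ (-(α / 2)) * x ^ α)) := by
      apply mul_nonneg hx.le
      apply div_nonneg (by positivity) (by linarith)
    rw [Real.norm_eq_abs, abs_of_nonneg hval]
    have key : x * (Real.pi * lam * Real.exp (-(Real.pi * lam * u)) /
          (c⁻¹ * u ^ (-(α / 2)) * x ^ α))
        = (c * (Real.pi * lam) * x ^ ((1 : ℝ) - α)) *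
            (u ^ (α / 2) * Real.exp (-(Real.pi * lam * u))) := by
      rw [Real.rpow_neg hu.le, Real.rpow_sub hx, Real.rpow_one]
      field_simp
    calc x * (Real.pi * lam * Real.exp (-(Real.pi * lam * u)) /
          (1 + c⁻¹ * u ^ (-(α / 2)) * x ^ α))
        ≤ x * (Real.pi * lam * Real.exp (-(Real.pi * lam * u)) /
            (c⁻¹ * u ^ (-(α / 2)) * x ^ α)) := by
          apply mul_le_mul_of_nonneg_left _ hx.le
          exact div_le_div_of_nonneg_left (by positivity) hD0 hD
      _ = _ := key
  · rw [ulF, Set.indicator_of_notMem hmem]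
    simpa using hRHS

/-- Integrability of the kernel on the product of restricted measures. -/
lemma ulF_int {lam c α : ℝ} (hlam : 0 < lam) (hc : 0 < c) (hα : 2 < α) :
    Integrable (Function.uncurry (ulF lam c α))
      ((volume.restrict (Set.Ioi 0)).prod (volume.restrict (Set.Ioi 0))) := by
  have hβ : 0 < Real.pi * lam := mul_pos Real.pi_pos hlam
  rw [integrable_prod_iff (ulF_meas lam c α).aestronglyMeasurable]
  have hFxmeas : ∀ x : ℝ, Measurable (ulF lam c α x) := fun x =>
    (ulF_meas lam c α).comp (measurable_const.prodMk measurable_id)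
  -- integrable dominator for the second component
  have hK2 : IntegrableOn (fun u : ℝ => u ^ (α / 2) * Real.exp (-(Real.pi * lam * u)))
      (Set.Ioi 0) := by
    have h := integrableOn_rpow_mul_exp_neg_mul_rpow (s := α / 2) (p := 1)
      (b := Real.pi * lam) (by linarith) one_pos hβ
    refine h.congr_fun (fun u hu => ?_) measurableSet_Ioi
    beta_reduce
    rw [Real.rpow_one, neg_mul]
  set K2 := ∫ u in Set.Ioi (0 : ℝ), u ^ (α / 2) * Real.exp (-(Real.pi * lam * u)) with hK2def
  have hK2nn : 0 ≤ K2 := by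
    apply setIntegral_nonneg measurableSet_Ioi
    intro u hu
    have : 0 < u ^ (α / 2) := Real.rpow_pos_of_pos hu _
    positivity
  constructor
  · -- a.e. integrability in the second variable
    filter_upwards [ae_restrict_mem measurableSet_Ioi] with x hx
    have hind : Integrable
        (Set.indicator (Set.Ioc 0 (x ^ 2)) (fun _ : ℝ => Real.pi * lam * x))
        (volume.restrict (Set.Ioi 0)) := by
      rw [integrable_indicator_iff measurableSet_Ioc]
      refine integrableOn_const (ne_of_lt ?_)
      rw [Measure.restrict_apply measurableSet_Ioc]
      exact lt_of_le_of_lt (measure_mono inter_subset_left) measure_Ioc_lt_top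
    exact Integrable.mono' hind (hFxmeas x).aestronglyMeasurable
      (Filter.Eventually.of_forall (ulF_bound1 hlam hc hx))
  · -- integrability of the integral of norms
    set N : ℝ → ℝ := fun x =>
      ∫ u, ‖Function.uncurry (ulF lam c α) (x, u)‖ ∂(volume.restrict (Set.Ioi 0)) with hNdef
    have hNm : AEStronglyMeasurable N (volume.restrict (Set.Ioi 0)) :=
      ((ulF_meas lam c α).norm.aestronglyMeasurable).integral_prod_right'
    have hNnn : ∀ x, 0 ≤ N x := fun x => integral_nonneg fun u => norm_nonneg _
    -- bound 1 : N x ≤ π λ x³ for 0 < x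
    have hNb1 : ∀ x : ℝ, 0 < x → N x ≤ Real.pi * lam * x ^ 3 := by
      intro x hx
      have hind : Integrable
          (Set.indicator (Set.Ioc 0 (x ^ 2)) (fun _ : ℝ => Real.pi * lam * x))
          (volume.restrict (Set.Ioi 0)) := by
        rw [integrable_indicator_iff measurableSet_Ioc]
        refine integrableOn_const (ne_of_lt ?_)
        rw [Measure.restrict_apply measurableSet_Ioc]
        exact lt_of_le_of_lt (measure_mono inter_subset_left) measure_Ioc_lt_top
      calc N x ≤ ∫ u, Set.indicator (Set.Ioc 0 (x ^ 2)) (fun _ : ℝ => Real.pi * lam * x) u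
            ∂(volume.restrict (Set.Ioi 0)) := by
            apply integral_mono_of_nonneg
              (Filter.Eventually.of_forall fun u => norm_nonneg _) hind
            exact Filter.Eventually.of_forall (ulF_bound1 hlam hc hx)
        _ = ((volume.restrict (Set.Ioi 0)) (Set.Ioc 0 (x ^ 2))).toReal • (Real.pi * lam * x) :=
            integral_indicator_const _ measurableSet_Ioc
        _ ≤ Real.pi * lam * x ^ 3 := by
            rw [Measure.restrict_apply measurableSet_Ioc,
              Set.inter_eq_left.2 (fun y hy => hy.1), Real.volume_Ioc]
            rw [smul_eq_mul, ENNReal.toReal_ofReal (by nlinarith [sq_nonneg x])]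
            nlinarith [hβ, sq_nonneg x]
    -- bound 2 : N x ≤ c π λ K2 x^(1-α) for 0 < x
    have hNb2 : ∀ x : ℝ, 0 < x → N x ≤ (c * (Real.pi * lam) * K2) * x ^ ((1 : ℝ) - α) := by
      intro x hx
      have hx1α : 0 < x ^ ((1 : ℝ) - α) := Real.rpow_pos_of_pos hx _
      calc N x ≤ ∫ u, (c * (Real.pi * lam) * x ^ ((1 : ℝ) - α)) *
            (u ^ (α / 2) * Real.exp (-(Real.pi * lam * u))) ∂(volume.restrict (Set.Ioi 0)) := by
            apply integral_mono_of_nonneg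
              (Filter.Eventually.of_forall fun u => norm_nonneg _) (hK2.const_mul _)
            filter_upwards [ae_restrict_mem measurableSet_Ioi] with u hu
            exact ulF_bound2 hlam hc hx hu
        _ = (c * (Real.pi * lam) * x ^ ((1 : ℝ) - α)) * K2 := by
            rw [MeasureTheory.integral_const_mul]
        _ = (c * (Real.pi * lam) * K2) * x ^ ((1 : ℝ) - α) := by ring
    -- combine on `Ioc 0 1 ∪ Ioi 1`
    have hsplit : Set.Ioc (0 : ℝ) 1 ∪ Set.Ioi 1 = Set.Ioi 0 :=
      Set.Ioc_union_Ioi_eq_Ioi zero_le_one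
    have hp1 : IntegrableOn N (Set.Ioc 0 1) volume := by
      apply Integrable.mono' (g := fun _ : ℝ => Real.pi * lam)
        (integrableOn_const (ne_of_lt measure_Ioc_lt_top))
        (hNm.mono_measure (Measure.restrict_mono Ioc_subset_Ioi_self le_rfl))
      filter_upwards [ae_restrict_mem measurableSet_Ioc] with x hx
      rw [Real.norm_eq_abs, abs_of_nonneg (hNnn x)]
      calc N x ≤ Real.pi * lam * x ^ 3 := hNb1 x hx.1
        _ ≤ Real.pi * lam := by nlinarith [hβ, pow_le_one₀ (n := 3) hx.1.le hx.2]
    have hp2 : IntegrableOn N (Set.Ioi 1) volume := by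
      have hrint : IntegrableOn (fun x : ℝ => x ^ ((1 : ℝ) - α)) (Set.Ioi 1) volume :=
        integrableOn_Ioi_rpow_of_lt (by linarith) one_pos
      have hgint : IntegrableOn
          (fun x : ℝ => (c * (Real.pi * lam) * K2) * x ^ ((1 : ℝ) - α))
          (Set.Ioi 1) volume := hrint.const_mul _
      have hsub : Set.Ioi (1 : ℝ) ⊆ Set.Ioi (0 : ℝ) := fun y hy => Set.mem_Ioi.2 (lt_trans one_pos hy)
      apply Integrable.mono' hgint
        (hNm.mono_measure (Measure.restrict_mono hsub le_rfl))
      filter_upwards [ae_restrict_mem measurableSet_Ioi] with x hx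
      rw [Real.norm_eq_abs, abs_of_nonneg (hNnn x)]
      exact hNb2 x (lt_trans one_pos hx)
    have : IntegrableOn N (Set.Ioc 0 1 ∪ Set.Ioi 1) volume := hp1.union hp2
    rwa [hsplit] at this

/-- The inner `x`-integral after the substitution `x = √u · v`. -/
lemma inner_sub {c α : ℝ} (hc : 0 < c) {u : ℝ} (hu : 0 < u) :
    ∫ x in Set.Ioi (Real.sqrt u), x / (1 + c⁻¹ * u ^ (-(α / 2)) * x ^ α)
      = u * ∫ v in Set.Ioi (1 : ℝ), v / (1 + c⁻¹ * v ^ α) := by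
  have hs : 0 < Real.sqrt u := Real.sqrt_pos.2 hu
  have h := integral_comp_mul_left_Ioi
    (fun x => x / (1 + c⁻¹ * u ^ (-(α / 2)) * x ^ α)) 1 hs
  rw [mul_one] at h
  have hkey : ∀ v ∈ Set.Ioi (1 : ℝ),
      (fun v => Real.sqrt u * v / (1 + c⁻¹ * u ^ (-(α / 2)) * (Real.sqrt u * v) ^ α)) v
        = (fun v => Real.sqrt u * (v / (1 + c⁻¹ * v ^ α))) v := by
    intro v hv
    have hv0 : (0 : ℝ) < v := lt_trans one_pos hv
    have h1 : (Real.sqrt u * v) ^ α = u ^ (α / 2) * v ^ α := by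
      rw [Real.mul_rpow (Real.sqrt_nonneg u) hv0.le]
      congr 1
      rw [Real.sqrt_eq_rpow, ← Real.rpow_mul hu.le]
      congr 1
      ring
    have h2 : u ^ (-(α / 2)) * u ^ (α / 2) = 1 := by
      rw [← Real.rpow_add hu]
      norm_num
    simp only
    rw [h1, show c⁻¹ * u ^ (-(α / 2)) * (u ^ (α / 2) * v ^ α)
        = c⁻¹ * (u ^ (-(α / 2)) * u ^ (α / 2)) * v ^ α from by ring, h2, mul_one,
      mul_div_assoc]
  rw [setIntegral_congr_fun measurableSet_Ioi hkey, MeasureTheory.integral_const_mul,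
    smul_eq_mul] at h
  have h' := h.symm
  rw [inv_mul_eq_iff_eq_mul₀ hs.ne'] at h'
  rw [h', ← mul_assoc, Real.mul_self_sqrt hu.le]

/-- The `x`-integral of the kernel, for fixed `u > 0`. -/
lemma x_integral {lam c α : ℝ} (hlam : 0 < lam) (hc : 0 < c) {u : ℝ} (hu : 0 < u) :
    ∫ x in Set.Ioi (0 : ℝ), ulF lam c α x u
      = Real.pi * lam * Real.exp (-(Real.pi * lam * u)) *
          (u * ∫ v in Set.Ioi (1 : ℝ), v / (1 + c⁻¹ * v ^ α)) := by
  have hs : 0 < Real.sqrt u := Real.sqrt_pos.2 hu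
  have hstep : ∀ x ∈ Set.Ioi (0 : ℝ), ulF lam c α x u
      = Set.indicator (Set.Ici (Real.sqrt u))
          (fun x => x * (Real.pi * lam * Real.exp (-(Real.pi * lam * u)) /
            (1 + c⁻¹ * u ^ (-(α / 2)) * x ^ α))) x := by
    intro x hx
    by_cases hmem : Real.sqrt u ≤ x
    · have hu2 : u ∈ Set.Ioc 0 (x ^ 2) := by
        refine ⟨hu, ?_⟩
        nlinarith [Real.sq_sqrt hu.le, Real.sqrt_nonneg u]
      rw [ulF, Set.indicator_of_mem hu2, Set.indicator_of_mem (Set.mem_Ici.2 hmem)]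
    · have hnot : u ∉ Set.Ioc 0 (x ^ 2) := by
        intro hu2
        apply hmem
        calc Real.sqrt u ≤ Real.sqrt (x ^ 2) := Real.sqrt_le_sqrt hu2.2
          _ = x := Real.sqrt_sq (le_of_lt hx)
      rw [ulF, Set.indicator_of_notMem hnot,
        Set.indicator_of_notMem (by simpa using hmem)]
  have hsub : Set.Ici (Real.sqrt u) ∩ Set.Ioi (0 : ℝ) = Set.Ici (Real.sqrt u) :=
    Set.inter_eq_left.2 fun y hy => Set.mem_Ioi.2 (lt_of_lt_of_le hs hy)
  rw [setIntegral_congr_fun measurableSet_Ioi hstep,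
    MeasureTheory.integral_indicator measurableSet_Ici,
    Measure.restrict_restrict measurableSet_Ici, hsub,
    MeasureTheory.integral_Ici_eq_integral_Ioi]
  have hre : (fun x => x * (Real.pi * lam * Real.exp (-(Real.pi * lam * u)) /
        (1 + c⁻¹ * u ^ (-(α / 2)) * x ^ α)))
      = fun x => Real.pi * lam * Real.exp (-(Real.pi * lam * u)) *
          (x / (1 + c⁻¹ * u ^ (-(α / 2)) * x ^ α)) := by
    funext x
    ring
  rw [hre, MeasureTheory.integral_const_mul, inner_sub hc hu]

lemma gamma_two_aux {β : ℝ} (hβ : 0 < β) :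
    ∫ u in Set.Ioi (0 : ℝ), u * Real.exp (-(β * u)) = β⁻¹ * β⁻¹ := by
  have h := Real.integral_rpow_mul_exp_neg_mul_Ioi (a := 2) (r := β) two_pos hβ
  have hg : Real.Gamma 2 = 1 := by
    rw [show (2 : ℝ) = (1 : ℕ) + 1 from by norm_num, Real.Gamma_nat_eq_factorial]
    norm_num
  rw [hg, mul_one] at h
  have h2 : ∀ t ∈ Set.Ioi (0 : ℝ),
      (fun t : ℝ => t ^ ((2 : ℝ) - 1) * Real.exp (-(β * t))) t
        = (fun t : ℝ => t * Real.exp (-(β * t))) t := by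
    intro t ht
    norm_num
  rw [setIntegral_congr_fun measurableSet_Ioi h2] at h
  rw [h, show ((1 : ℝ) / β) ^ (2 : ℝ) = ((1 : ℝ) / β) ^ (2 : ℕ) from by
    rw [← Real.rpow_natCast]; norm_num]
  rw [one_div, sq]

/-- Exponent of the Laplace transform of uplink interference under full channel-inversion
power control: for λ > 0, c > 0 and α > 2,
2πλ ∫_0^∞ x (∫_0^{x²} πλ e^{-πλu} / (1 + c⁻¹ u^{-α/2} x^α) du) dx
  = 2 ∫_1^∞ v / (1 + c⁻¹ v^α) dv,
independent of λ. -/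
theorem uplink_laplace_exponent_full_power_control (lam c α : ℝ)
    (hlam : 0 < lam) (hc : 0 < c) (hα : 2 < α) :
    2 * Real.pi * lam *
        ∫ x in Set.Ioi (0 : ℝ),
          x * ∫ u in (0 : ℝ)..x ^ 2,
            (Real.pi * lam * Real.exp (-(Real.pi * lam * u))) /
              (1 + c⁻¹ * u ^ (-(α / 2)) * x ^ α) =
      2 * ∫ v in Set.Ioi (1 : ℝ), v / (1 + c⁻¹ * v ^ α) := by
  have hβ : 0 < Real.pi * lam := mul_pos Real.pi_pos hlam
  have hA : ∀ x ∈ Set.Ioi (0 : ℝ),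
      (fun x => x * ∫ u in (0 : ℝ)..x ^ 2,
        (Real.pi * lam * Real.exp (-(Real.pi * lam * u))) /
          (1 + c⁻¹ * u ^ (-(α / 2)) * x ^ α)) x
      = (fun x => ∫ u in Set.Ioi (0 : ℝ), ulF lam c α x u) x := by
    intro x hx
    simp only
    rw [intervalIntegral.integral_of_le (sq_nonneg x)]
    unfold ulF
    have hsub : Set.Ioc (0 : ℝ) (x ^ 2) ∩ Set.Ioi (0 : ℝ) = Set.Ioc (0 : ℝ) (x ^ 2) :=
      Set.inter_eq_left.2 fun y hy => hy.1
    rw [MeasureTheory.integral_indicator measurableSet_Ioc,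
      Measure.restrict_restrict measurableSet_Ioc, hsub,
      ← MeasureTheory.integral_const_mul]
  rw [setIntegral_congr_fun measurableSet_Ioi hA,
    MeasureTheory.integral_integral_swap (ulF_int hlam hc hα),
    setIntegral_congr_fun measurableSet_Ioi
      (fun u hu => x_integral hlam hc (Set.mem_Ioi.1 hu))]
  have hre : (fun u => Real.pi * lam * Real.exp (-(Real.pi * lam * u)) *
        (u * ∫ v in Set.Ioi (1 : ℝ), v / (1 + c⁻¹ * v ^ α)))
      = fun u => (u * Real.exp (-(Real.pi * lam * u))) *
          (Real.pi * lam * ∫ v in Set.Ioi (1 : ℝ), v / (1 + c⁻¹ * v ^ α)) := by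
    funext u
    ring
  rw [hre, MeasureTheory.integral_mul_const, gamma_two_aux hβ]
  have hπ : Real.pi ≠ 0 := Real.pi_ne_zero
  have hl : lam ≠ 0 := hlam.ne'
  field_simp
  ring_nf
  congr 1
  ext v
  ring
end

section
/- Let k ≥ 1, let λ_1,…,λ_k > 0, p_1,…,p_k > 0 and α > 2 be real numbers, and fix i ∈ {1,…,k}. Then ∫_0^∞ 2πλ_i r · exp(-π r² Σ_{j=1}^{k} λ_j (p_j/p_i)^{2/α}) dr = λ_i p_i^{2/α} / (Σ_{j=1}^{k} λ_j p_j^{2/α}). In particular these quantities are nonnegative and sum to 1 over i = 1,…,k, so they form a probability distribution (the per-tier association probabilities). -/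
open MeasureTheory Real Set

lemma integral_mul_exp_neg_mul_sq_Ioi {b : ℝ} (hb : 0 < b) :
    ∫ r in Set.Ioi (0 : ℝ), r * Real.exp (-b * r ^ 2) = (2 * b)⁻¹ := by
  have hderiv : ∀ x ∈ Set.Ioi (0 : ℝ),
      HasDerivAt (fun x : ℝ => -(2 * b)⁻¹ * Real.exp (-b * x ^ 2))
        (x * Real.exp (-b * x ^ 2)) x := by
    intro x _
    have h1 : HasDerivAt (fun x : ℝ => -b * x ^ 2) (-b * (2 * x)) x := by
      simpa using ((hasDerivAt_pow 2 x).const_mul (-b))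
    have h2 := (h1.exp).const_mul (-(2 * b)⁻¹)
    refine h2.congr_deriv ?_
    have hb2 : b * b⁻¹ = 1 := mul_inv_cancel₀ hb.ne'
    linear_combination (x * Real.exp (-b * x ^ 2)) * hb2
  have htend : Filter.Tendsto (fun x : ℝ => -(2 * b)⁻¹ * Real.exp (-b * x ^ 2))
      Filter.atTop (nhds 0) := by
    have : Filter.Tendsto (fun x : ℝ => Real.exp (-b * x ^ 2)) Filter.atTop (nhds 0) := by
      apply Real.tendsto_exp_atBot.comp
      exact (Filter.tendsto_pow_atTop (two_ne_zero)).const_mul_atTop_of_neg (by linarith)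
    simpa using this.const_mul (-(2 * b)⁻¹)
  have hcont : ContinuousWithinAt (fun x : ℝ => -(2 * b)⁻¹ * Real.exp (-b * x ^ 2))
      (Set.Ici 0) 0 :=
    (Continuous.continuousWithinAt (by continuity))
  have hint : IntegrableOn (fun x : ℝ => x * Real.exp (-b * x ^ 2)) (Set.Ioi 0) :=
    (integrable_mul_exp_neg_mul_sq hb).integrableOn
  have := MeasureTheory.integral_Ioi_of_hasDerivAt_of_tendsto hcont hderiv hint htend
  rw [this]
  simp

/-- Per-tier association probabilities in a k-tier HetNet with maximum-average-power
cell association: for each tier i,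
∫_0^∞ 2πλ_i r exp(-π r² Σ_j λ_j (p_j/p_i)^{2/α}) dr = λ_i p_i^{2/α} / Σ_j λ_j p_j^{2/α};
these quantities are nonnegative and sum to 1 over i. -/
theorem hetnet_association_probability (k : ℕ) (hk : 1 ≤ k)
    (lam p : Fin k → ℝ) (hlam : ∀ i, 0 < lam i) (hp : ∀ i, 0 < p i)
    (α : ℝ) (hα : 2 < α) (i : Fin k) :
    (∫ r in Set.Ioi (0 : ℝ),
        2 * Real.pi * lam i * r *
          Real.exp (-(Real.pi * r ^ 2 * ∑ j, lam j * (p j / p i) ^ (2 / α))) =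
      lam i * p i ^ (2 / α) / ∑ j, lam j * p j ^ (2 / α)) ∧
    (0 ≤ lam i * p i ^ (2 / α) / ∑ j, lam j * p j ^ (2 / α)) ∧
    ∑ i', lam i' * p i' ^ (2 / α) / ∑ j, lam j * p j ^ (2 / α) = 1 := by
  have hne : Nonempty (Fin k) := ⟨⟨0, hk⟩⟩
  set c : ℝ := ∑ j, lam j * (p j / p i) ^ (2 / α) with hc_def
  set S : ℝ := ∑ j, lam j * p j ^ (2 / α) with hS_def
  have hS : 0 < S :=
    Finset.sum_pos (fun j _ => mul_pos (hlam j) (Real.rpow_pos_of_pos (hp j) _))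
      Finset.univ_nonempty
  have hc : 0 < c :=
    Finset.sum_pos (fun j _ => mul_pos (hlam j) (Real.rpow_pos_of_pos (div_pos (hp j) (hp i)) _))
      Finset.univ_nonempty
  have hcS : c = S / p i ^ (2 / α) := by
    rw [hc_def, hS_def, Finset.sum_div]
    refine Finset.sum_congr rfl fun j _ => ?_
    rw [Real.div_rpow (hp j).le (hp i).le, mul_div_assoc]
  have hpi : (0:ℝ) < p i ^ (2 / α) := Real.rpow_pos_of_pos (hp i) _
  refine ⟨?_, le_of_lt (div_pos (mul_pos (hlam i) hpi) hS), ?_⟩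
  · have key := integral_mul_exp_neg_mul_sq_Ioi (b := Real.pi * c) (by positivity)
    have : (∫ r in Set.Ioi (0 : ℝ),
        2 * Real.pi * lam i * r *
          Real.exp (-(Real.pi * r ^ 2 * c)))
        = (2 * Real.pi * lam i) * ∫ r in Set.Ioi (0 : ℝ),
          r * Real.exp (-(Real.pi * c) * r ^ 2) := by
      rw [← MeasureTheory.integral_const_mul]
      refine MeasureTheory.setIntegral_congr_fun measurableSet_Ioi fun r _ => ?_
      ring_nf
    rw [this, key, hcS]
    field_simp
  · rw [← Finset.sum_div, div_eq_one_iff_eq hS.ne']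
end
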